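/- Let n > 1 and let I₁, …, Iₙ be bounded nonempty open intervals of ℝ whose union is connected. Then the intervals can be re-indexed by a permutation σ of {1, …, n} so that for every k = 1, …, n−1, the union Iσ(1) ∪ ⋯ ∪ Iσ(k) is connected and has nonempty intersection with Iσ(k+1). -/

import Mathlib

namespace ChainAux

variable {n : ℕ} (c d : Fin n → ℝ)

/-- Union of the intervals indexed by a list. -/
def U (l : List (Fin n)) : Set ℝ := ⋃ i ∈ l, Set.Ioo (c i) (d i)

lemma U_append_singleton (l : List (Fin n)) (j : Fin n) :
    U c d (l ++ [j]) = U c d l ∪ Set.Ioo (c j) (d j) := by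
  ext x
  simp [U, or_comm]

lemma isOpen_U (l : List (Fin n)) : IsOpen (U c d l) :=
  isOpen_biUnion fun _ _ => isOpen_Ioo

/-- The invariant: nodup list whose prefix unions are connected and each new
interval overlaps the previous union. -/
def Good (l : List (Fin n)) : Prop :=
  l.Nodup ∧
  (∀ k, k < l.length → IsConnected (U c d (l.take (k + 1)))) ∧
  (∀ k, (h : k + 1 < l.length) →
    (U c d (l.take (k + 1)) ∩ Set.Ioo (c l[k + 1]) (d l[k + 1])).Nonempty)

variable (hcd : ∀ k, c k < d k)
  (hconn : IsConnected (⋃ k, Set.Ioo (c k) (d k)))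

include hcd hconn in
lemma exists_overlap (l : List (Fin n)) (hne : l ≠ []) (hlen : l.length < n)
    (hnd : l.Nodup) :
    ∃ j : Fin n, j ∉ l ∧ (U c d l ∩ Set.Ioo (c j) (d j)).Nonempty := by
  by_contra hcon
  push_neg at hcon
  set A := U c d l with hA
  set B := ⋃ j ∈ {j : Fin n | j ∉ l}, Set.Ioo (c j) (d j) with hB
  have hBopen : IsOpen B := isOpen_biUnion fun _ _ => isOpen_Ioo
  have hsub : (⋃ k, Set.Ioo (c k) (d k)) ⊆ A ∪ B := by
    intro x hx
    obtain ⟨k, hk⟩ := Set.mem_iUnion.mp hx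
    by_cases hkl : k ∈ l
    · exact Or.inl (Set.mem_biUnion hkl hk)
    · exact Or.inr (Set.mem_biUnion hkl hk)
  -- some element not in l
  have : l.toFinset.card < n := by
    rw [List.toFinset_card_of_nodup hnd]; exact hlen
  obtain ⟨j, hj⟩ : ∃ j : Fin n, j ∉ l := by
    by_contra hall
    push_neg at hall
    have : (Finset.univ : Finset (Fin n)).card ≤ l.toFinset.card := by
      apply Finset.card_le_card
      intro x _
      simpa using hall x
    simp at this
    omega
  obtain ⟨i, hi⟩ := List.exists_mem_of_ne_nil l hne
  have hAne : ((⋃ k, Set.Ioo (c k) (d k)) ∩ A).Nonempty := by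
    obtain ⟨x, hx⟩ := Set.nonempty_Ioo.mpr (hcd i)
    exact ⟨x, Set.mem_iUnion.mpr ⟨i, hx⟩, Set.mem_biUnion hi hx⟩
  have hBne : ((⋃ k, Set.Ioo (c k) (d k)) ∩ B).Nonempty := by
    obtain ⟨x, hx⟩ := Set.nonempty_Ioo.mpr (hcd j)
    exact ⟨x, Set.mem_iUnion.mpr ⟨j, hx⟩, Set.mem_biUnion hj hx⟩
  obtain ⟨x, -, hxA, hxB⟩ :=
    hconn.isPreconnected A B (isOpen_U c d l) hBopen hsub hAne hBne
  obtain ⟨j', hj', hxj'⟩ := Set.mem_iUnion₂.mp hxB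
  exact Set.eq_empty_iff_forall_notMem.mp (hcon j' hj') x ⟨hxA, hxj'⟩

include hcd hconn in
lemma good_extend {l : List (Fin n)} (hg : Good c d l) (hne : l ≠ [])
    (hlen : l.length < n) : ∃ j, j ∉ l ∧ Good c d (l ++ [j]) := by
  obtain ⟨j, hj, hov⟩ := exists_overlap c d hcd hconn l hne hlen hg.1
  have hlpos : 0 < l.length := List.length_pos_iff.mpr hne
  have htake_all : l.take (l.length - 1 + 1) = l := by
    rw [Nat.sub_add_cancel hlpos, List.take_length]
  have hUl : IsConnected (U c d l) := by
    have := hg.2.1 (l.length - 1) (by omega)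
    rwa [htake_all] at this
  refine ⟨j, hj, ?_, ?_, ?_⟩
  · simp [List.nodup_append, hg.1, hj]
    intro a ha h; exact hj (h ▸ ha)
  · intro k hk
    rw [List.length_append, List.length_singleton] at hk
    rcases lt_or_ge k l.length with h | h
    · rw [List.take_append_of_le_length (by omega)]
      exact hg.2.1 k h
    · have hk' : k = l.length := by omega
      have : l.length + 1 ≤ (l ++ [j]).length := by simp
      rw [hk', List.take_of_length_le (by simp), U_append_singleton]
      exact hUl.union hov (isConnected_Ioo (hcd j))
  · intro k hk
    rw [List.length_append, List.length_singleton] at hk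
    rcases lt_or_ge (k + 1) l.length with h | h
    · rw [List.take_append_of_le_length (by omega),
        List.getElem_append_left (by omega)]
      exact hg.2.2 k h
    · have hk' : k + 1 = l.length := by omega
      have hget : (l ++ [j])[k + 1]'(by simp; omega) = j := by
        rw [List.getElem_append_right (by omega)]
        simp [hk']
      rw [List.take_append_of_le_length (by omega), hget, hk',
        List.take_length]
      exact hov

include hcd hconn in
lemma exists_good (hn : 0 < n) :
    ∀ m, 1 ≤ m → m ≤ n → ∃ l : List (Fin n), Good c d l ∧ l.length = m := by
  intro m h1 h2
  induction m with
  | zero => omega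
  | succ m ih =>
    rcases Nat.eq_or_lt_of_le h1 with h | h
    · -- m + 1 = 1
      refine ⟨[⟨0, hn⟩], ⟨?_, ?_, ?_⟩, by simp [← h]⟩
      · simp
      · intro k hk
        simp only [List.length_singleton] at hk
        interval_cases k
        simpa [U] using isConnected_Ioo (hcd ⟨0, hn⟩)
      · intro k hk
        simp at hk
    · obtain ⟨l, hg, hlen⟩ := ih (by omega) (by omega)
      have hne : l ≠ [] := by
        intro h'; rw [h'] at hlen; simp at hlen; omega
      obtain ⟨j, -, hg'⟩ := good_extend c d hcd hconn hg hne (by omega)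
      exact ⟨l ++ [j], hg', by simp [hlen]⟩

end ChainAux

theorem exists_perm_chain_of_isConnected_union (n : ℕ) (hn : 1 < n)
    (c d : Fin n → ℝ) (hcd : ∀ k, c k < d k)
    (hconn : IsConnected (⋃ k, Set.Ioo (c k) (d k))) :
    ∃ σ : Equiv.Perm (Fin n), ∀ k : ℕ, (hk : k + 1 < n) →
      IsConnected (⋃ j : Fin n, ⋃ (_ : (j : ℕ) ≤ k), Set.Ioo (c (σ j)) (d (σ j))) ∧
      ((⋃ j : Fin n, ⋃ (_ : (j : ℕ) ≤ k), Set.Ioo (c (σ j)) (d (σ j))) ∩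
        Set.Ioo (c (σ ⟨k + 1, hk⟩)) (d (σ ⟨k + 1, hk⟩))).Nonempty := by
  obtain ⟨l, hg, hlen⟩ :=
    ChainAux.exists_good c d hcd hconn (by omega) n (by omega) le_rfl
  have hinj : Function.Injective (fun j : Fin n => l[(j : ℕ)]'(by omega)) := by
    intro a b hab
    have := (List.nodup_iff_injective_get.mp hg.1)
      (show l.get ⟨a, by omega⟩ = l.get ⟨b, by omega⟩ by
        simpa [List.get_eq_getElem] using hab)
    simpa [Fin.ext_iff] using this
  let σ : Equiv.Perm (Fin n) :=
    Equiv.ofBijective _ (Finite.injective_iff_bijective.mp hinj)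
  have hσ : ∀ j : Fin n, σ j = l[(j : ℕ)]'(by omega) := fun j => rfl
  refine ⟨σ, fun k hk => ?_⟩
  have hset : (⋃ j : Fin n, ⋃ (_ : (j : ℕ) ≤ k), Set.Ioo (c (σ j)) (d (σ j))) =
      ChainAux.U c d (l.take (k + 1)) := by
    ext x
    simp only [ChainAux.U, Set.mem_iUnion, exists_prop]
    constructor
    · rintro ⟨j, hj, hx⟩
      refine ⟨l[(j : ℕ)]'(by omega), ?_, by rwa [hσ] at hx⟩
      have : (l.take (k + 1))[(j : ℕ)]'(by simp [hlen]; omega) = l[(j : ℕ)]'(by omega) :=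
        List.getElem_take
      rw [← this]
      exact List.getElem_mem _
    · rintro ⟨i, hi, hx⟩
      obtain ⟨m, hm, hmi⟩ := List.getElem_of_mem hi
      have hm' : m < min (k + 1) n := by simpa [hlen] using hm
      have hmn : m < n := by omega
      refine ⟨⟨m, hmn⟩, by simp; omega, ?_⟩
      rw [hσ]
      have : (l.take (k + 1))[m]'hm = l[m]'(by omega) :=
        List.getElem_take
      rw [this] at hmi
      simpa [hmi] using hx
  constructor
  · rw [hset]
    exact hg.2.1 k (by omega)
  · rw [hset, hσ]
    exact hg.2.2 k (by omega)
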